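/- Fix q with 0 < q < 1/2 and ε with 0 < ε < 1/2, define φ(x) = x/(1 − e^{−qx}) − 2ε for x > 0 and φ(0) = 1/q − 2ε. Then φ has a unique fixed point x₀ > 1, φ is strictly increasing, and for all sufficiently small ε one has x₀ < (2/q) log(1/ε). -/

import Mathlib

/-- The function `φ(x) = x/(1 − e^{−qx}) − 2ε` for `x > 0`, extended continuously by
`φ(0) = 1/q − 2ε`. -/
noncomputable def phiFn (q ε x : ℝ) : ℝ :=
  if x = 0 then 1 / q - 2 * ε else x / (1 - Real.exp (-q * x)) - 2 * ε

lemma lemA {t : ℝ} (ht : 0 < t) : 1 - Real.exp (-t) < t := by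
  have h := Real.add_one_lt_exp (x := -t) (by linarith)
  linarith

lemma dpos {t : ℝ} (ht : 0 < t) : 0 < 1 - Real.exp (-t) := by
  have : Real.exp (-t) < Real.exp 0 := Real.exp_lt_exp.2 (by linarith)
  rw [Real.exp_zero] at this
  linarith

lemma exp_gt_one {t : ℝ} (ht : 0 < t) : 1 < Real.exp t := by
  have : Real.exp 0 < Real.exp t := Real.exp_lt_exp.2 ht
  rwa [Real.exp_zero] at this

lemma g_anti : StrictAntiOn (fun t : ℝ => (1 - Real.exp (-t)) / t) (Set.Ioi 0) := by
  apply strictAntiOn_of_deriv_neg (convex_Ioi 0)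
  · exact ContinuousOn.div (by fun_prop) continuousOn_id (fun t ht => ne_of_gt ht)
  · intro t ht
    rw [interior_Ioi] at ht
    have ht0 : (0:ℝ) < t := ht
    have h1 : HasDerivAt (fun s : ℝ => 1 - Real.exp (-s)) (Real.exp (-t)) t := by
      have h := ((Real.hasDerivAt_exp (-t)).comp t (hasDerivAt_neg t)).const_sub 1
      simpa using h
    have h2 : HasDerivAt (fun s : ℝ => (1 - Real.exp (-s)) / s)
        ((Real.exp (-t) * t - (1 - Real.exp (-t)) * 1) / t ^ 2) t :=
      h1.div (hasDerivAt_id t) (ne_of_gt ht0)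
    rw [h2.deriv]
    apply div_neg_of_neg_of_pos _ (by positivity)
    have h3 := Real.add_one_lt_exp (ne_of_gt ht0)
    have h4 : Real.exp (-t) * (t + 1) < 1 := by
      have h5 := mul_lt_mul_of_pos_left h3 (Real.exp_pos (-t))
      rwa [← Real.exp_add, neg_add_cancel, Real.exp_zero] at h5
    nlinarith

lemma lemB {u v : ℝ} (hu : 0 < u) (huv : u < v) :
    u * (1 - Real.exp (-v)) < v * (1 - Real.exp (-u)) := by
  have hv : 0 < v := hu.trans huv
  have h := g_anti (Set.mem_Ioi.2 hu) (Set.mem_Ioi.2 hv) huv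
  simp only at h
  rw [div_lt_div_iff₀ hv hu] at h
  linarith

lemma F_anti {q : ℝ} (hq0 : 0 < q) :
    StrictAntiOn (fun x : ℝ => x / (Real.exp (q * x) - 1)) (Set.Ioi 0) := by
  apply strictAntiOn_of_deriv_neg (convex_Ioi 0)
  · apply ContinuousOn.div continuousOn_id (by fun_prop)
    intro x hx
    have hx0 : (0:ℝ) < x := hx
    have := exp_gt_one (by positivity : 0 < q * x)
    linarith
  · intro x hx
    rw [interior_Ioi] at hx
    have hx0 : (0:ℝ) < x := hx
    have hE : 1 < Real.exp (q * x) := exp_gt_one (by positivity)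
    have hden : HasDerivAt (fun y : ℝ => Real.exp (q * y) - 1) (Real.exp (q * x) * q) x := by
      have h := ((Real.hasDerivAt_exp (q * x)).comp x ((hasDerivAt_id x).const_mul q)).sub_const 1
      simpa using h
    have h2 : HasDerivAt (fun y : ℝ => y / (Real.exp (q * y) - 1))
        ((1 * (Real.exp (q * x) - 1) - x * (Real.exp (q * x) * q)) / (Real.exp (q * x) - 1) ^ 2) x :=
      (hasDerivAt_id x).div hden (by linarith)
    rw [h2.deriv]
    apply div_neg_of_neg_of_pos _ (pow_pos (by linarith) 2)
    have hA := lemA (show 0 < q * x by positivity)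
    have he : Real.exp (q * x) * Real.exp (-(q * x)) = 1 := by
      rw [← Real.exp_add]; simp
    have h5 : Real.exp (q * x) - 1 < q * x * Real.exp (q * x) := by
      nlinarith [mul_lt_mul_of_pos_right hA (Real.exp_pos (q * x))]
    nlinarith

lemma phi_eq {q ε x : ℝ} (hq0 : 0 < q) (hx : 0 < x) :
    phiFn q ε x = x / (Real.exp (q * x) - 1) + x - 2 * ε := by
  have hE : 1 < Real.exp (q * x) := exp_gt_one (by positivity)
  have hE0 : Real.exp (q * x) ≠ 0 := (Real.exp_pos _).ne'
  have hE1 : Real.exp (q * x) - 1 ≠ 0 := by linarith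
  rw [phiFn, if_neg (ne_of_gt hx), show -q * x = -(q * x) by ring, Real.exp_neg]
  have hinv : 1 - (Real.exp (q * x))⁻¹ ≠ 0 := by
    have : (Real.exp (q * x))⁻¹ < 1 := by
      rw [inv_lt_one_iff₀]; right; exact hE
    intro h; rw [sub_eq_zero] at h; rw [← h] at this; linarith
  field_simp
  have hE1' : Real.exp (x * q) - 1 ≠ 0 := by rwa [mul_comm x q]
  field_simp
  ring

lemma fix_iff {q ε x : ℝ} (hq0 : 0 < q) (hx : 0 < x) :
    phiFn q ε x = x ↔ x / (Real.exp (q * x) - 1) = 2 * ε := by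
  rw [phi_eq hq0 hx]
  constructor <;> intro h <;> linarith

lemma phi_mono {q : ℝ} (hq0 : 0 < q) (ε : ℝ) : StrictMonoOn (phiFn q ε) (Set.Ici 0) := by
  intro a ha b hb hab
  have hb0 : 0 < b := lt_of_le_of_lt ha hab
  have hdb : 0 < 1 - Real.exp (-(q * b)) := dpos (by positivity)
  simp only [phiFn, if_neg (ne_of_gt hb0)]
  rcases eq_or_lt_of_le (Set.mem_Ici.mp ha) with h0 | ha0
  · rw [if_pos h0.symm]
    have hA : 1 - Real.exp (-(q * b)) < q * b := lemA (by positivity)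
    rw [show -q * b = -(q * b) by ring, sub_lt_sub_iff_right, div_lt_div_iff₀ hq0 hdb]
    nlinarith
  · rw [if_neg (ne_of_gt ha0)]
    have hda : 0 < 1 - Real.exp (-(q * a)) := dpos (by positivity)
    rw [show -q * a = -(q * a) by ring, show -q * b = -(q * b) by ring,
      sub_lt_sub_iff_right, div_lt_div_iff₀ hda hdb]
    have h := lemB (show 0 < q * a by positivity) (by nlinarith : q * a < q * b)
    nlinarith

lemma F1_gt_one {q : ℝ} (hq0 : 0 < q) (hq : q < 1 / 2) :
    1 < 1 / (Real.exp (q * 1) - 1) := by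
  have h1 : Real.exp (q * 1) ≤ Real.exp (1 / 2) := Real.exp_le_exp.2 (by linarith)
  have h2 : Real.exp (1 / 2) < 2 := by
    have h3 : Real.exp (1 / 2) * Real.exp (1 / 2) = Real.exp 1 := by
      rw [← Real.exp_add]; norm_num
    nlinarith [Real.exp_one_lt_d9, Real.exp_pos (1/2 : ℝ)]
  have hE : 1 < Real.exp (q * 1) := exp_gt_one (by linarith)
  rw [one_lt_div (by linarith)]
  linarith

lemma fix_gt_one {q ε x : ℝ} (hq0 : 0 < q) (hq : q < 1 / 2) (hε : 0 < ε) (hε2 : ε < 1 / 2)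
    (hx : 0 < x) (hfx : x / (Real.exp (q * x) - 1) = 2 * ε) : 1 < x := by
  by_contra h
  push_neg at h
  have hF1 := F1_gt_one hq0 hq
  rcases eq_or_lt_of_le h with h1 | h1
  · rw [h1] at hfx
    rw [hfx] at hF1
    linarith
  · have := F_anti hq0 (Set.mem_Ioi.2 hx) (Set.mem_Ioi.2 one_pos) h1
    simp only at this
    rw [hfx] at this
    linarith

lemma quad_le_exp {t : ℝ} (ht : 0 ≤ t) : t ^ 2 / 4 ≤ Real.exp t - 1 := by
  have h1 : t / 2 + 1 ≤ Real.exp (t / 2) := Real.add_one_le_exp _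
  have h2 : Real.exp (t / 2) * Real.exp (t / 2) = Real.exp t := by
    rw [← Real.exp_add]; ring_nf
  nlinarith

lemma fix_exists {q ε : ℝ} (hq0 : 0 < q) (hq : q < 1 / 2) (hε : 0 < ε) (hε2 : ε < 1 / 2) :
    ∃ x, 1 < x ∧ x / (Real.exp (q * x) - 1) = 2 * ε := by
  obtain ⟨M, hM⟩ : ∃ M : ℝ, M = 2 / (q ^ 2 * ε) + 2 := ⟨_, rfl⟩
  have hMpos : 0 < M := by rw [hM]; positivity
  have h1M : (1 : ℝ) ≤ M := by
    have : 0 < 2 / (q ^ 2 * ε) := by positivity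
    linarith
  have hcont : ContinuousOn (fun x : ℝ => x / (Real.exp (q * x) - 1)) (Set.Icc 1 M) := by
    apply ContinuousOn.div continuousOn_id (by fun_prop)
    intro x hx
    have : 1 < Real.exp (q * x) := exp_gt_one (by nlinarith [hx.1])
    linarith
  have hquad : (q * M) ^ 2 / 4 ≤ Real.exp (q * M) - 1 := quad_le_exp (by positivity)
  have hFM : M / (Real.exp (q * M) - 1) < 2 * ε := by
    have hden : 0 < Real.exp (q * M) - 1 := by nlinarith [pow_pos (mul_pos hq0 hMpos) 2]
    rw [div_lt_iff₀ hden]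
    have hMval : ε * q ^ 2 * M = 2 + 2 * ε * q ^ 2 := by
      rw [hM]; field_simp
    have hMval2 : ε * q ^ 2 * M * M = (2 + 2 * ε * q ^ 2) * M := by
      rw [hMval]
    nlinarith [mul_le_mul_of_nonneg_left hquad (by linarith : (0:ℝ) ≤ 2 * ε),
      mul_pos (mul_pos hε (pow_pos hq0 2)) hMpos, hMval2]
  have hF1 := F1_gt_one hq0 hq
  have hmem : 2 * ε ∈ Set.Icc ((fun x : ℝ => x / (Real.exp (q * x) - 1)) M)
      ((fun x : ℝ => x / (Real.exp (q * x) - 1)) 1) := by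
    constructor
    · exact le_of_lt hFM
    · simp only
      linarith
  obtain ⟨x, hx, hFx⟩ := intermediate_value_Icc' h1M hcont hmem
  refine ⟨x, ?_, hFx⟩
  exact fix_gt_one hq0 hq hε hε2 (by linarith [hx.1]) hFx

lemma FX_lt {q ε : ℝ} (hq0 : 0 < q) (hε : 0 < ε) (hε2 : ε < 1 / 2)
    (hεq : ε < 9 * q ^ 2 / 64) :
    (2 / q) * Real.log (1 / ε) / (Real.exp (q * ((2 / q) * Real.log (1 / ε))) - 1) < 2 * ε := by
  have hinv : 1 < 1 / ε := by rw [lt_div_iff₀ hε]; linarith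
  have hL : 0 < Real.log (1 / ε) := Real.log_pos hinv
  have hqX : q * ((2 / q) * Real.log (1 / ε)) = 2 * Real.log (1 / ε) := by
    field_simp
  have hexp : Real.exp (q * ((2 / q) * Real.log (1 / ε))) = (1 / ε) ^ 2 := by
    rw [hqX, show (2 : ℝ) * Real.log (1 / ε) = Real.log ((1 / ε) ^ 2) by
      rw [Real.log_pow]; push_cast; ring]
    exact Real.exp_log (by positivity)
  have hden : 0 < (1 / ε) ^ 2 - 1 := by nlinarith
  rw [hexp, div_lt_iff₀ hden]
  obtain ⟨s, hs⟩ : ∃ s : ℝ, s = Real.sqrt ε := ⟨_, rfl⟩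
  have hs0 : 0 < s := hs ▸ Real.sqrt_pos.2 hε
  have hs2 : s ^ 2 = ε := by rw [hs]; exact Real.sq_sqrt hε.le
  have hs38 : s < 3 * q / 8 := by
    rw [hs, show 9 * q ^ 2 / 64 = (3 * q / 8) ^ 2 by ring] at *
    calc Real.sqrt ε < Real.sqrt ((3 * q / 8) ^ 2) := Real.sqrt_lt_sqrt hε.le hεq
      _ = 3 * q / 8 := Real.sqrt_sq (by positivity)
  have hsinv : Real.sqrt (1 / ε) = 1 / s := by
    rw [hs, one_div, Real.sqrt_inv, one_div]
  have hlog : Real.log (1 / ε) ≤ 2 * (1 / s) - 2 := by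
    have h1 : Real.log (Real.sqrt (1 / ε)) = Real.log (1 / ε) / 2 :=
      Real.log_sqrt (by positivity)
    have h2 : Real.log (Real.sqrt (1 / ε)) ≤ Real.sqrt (1 / ε) - 1 :=
      Real.log_le_sub_one_of_pos (Real.sqrt_pos.2 (by positivity))
    rw [h1, hsinv] at *
    linarith
  have hss : s * (1 / s) = 1 := mul_one_div_cancel hs0.ne'
  have h4 : s * Real.log (1 / ε) ≤ 2 - 2 * s := by
    nlinarith [mul_le_mul_of_nonneg_left hlog hs0.le]
  have key : ε * Real.log (1 / ε) < q * (1 - ε ^ 2) := by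
    have h5 := mul_le_mul_of_nonneg_left h4 hs0.le
    have hε4 : ε ^ 2 < 1 / 4 := by nlinarith
    nlinarith
  have hqε : 0 < q * ε := mul_pos hq0 hε
  rw [← mul_lt_mul_iff_of_pos_right hqε]
  have e1 : (2 / q * Real.log (1 / ε)) * (q * ε) = 2 * (ε * Real.log (1 / ε)) := by
    field_simp
  have e2 : (2 * ε * ((1 / ε) ^ 2 - 1)) * (q * ε) = 2 * (q * (1 - ε ^ 2)) := by
    field_simp
  rw [e1, e2]
  linarith

lemma fix_lt_X {q ε x : ℝ} (hq0 : 0 < q) (hε : 0 < ε) (hε2 : ε < 1 / 2)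
    (hεq : ε < 9 * q ^ 2 / 64) (hx : 0 < x)
    (hfx : x / (Real.exp (q * x) - 1) = 2 * ε) :
    x < (2 / q) * Real.log (1 / ε) := by
  have hinv : 1 < 1 / ε := by rw [lt_div_iff₀ hε]; linarith
  have hL : 0 < Real.log (1 / ε) := Real.log_pos hinv
  have hX : 0 < (2 / q) * Real.log (1 / ε) := by positivity
  have hFX := FX_lt hq0 hε hε2 hεq
  by_contra h
  push_neg at h
  rcases eq_or_lt_of_le h with h1 | h1
  · rw [h1] at hFX
    rw [hfx] at hFX
    linarith
  · have := F_anti hq0 (Set.mem_Ioi.2 hX) (Set.mem_Ioi.2 hx) h1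
    simp only at this
    rw [hfx] at this
    linarith

lemma fix_pos {q ε x : ℝ} (hq0 : 0 < q) (hq : q < 1 / 2) (hε2 : ε < 1 / 2)
    (hx0 : 0 ≤ x) (hfx : phiFn q ε x = x) : 0 < x := by
  rcases eq_or_lt_of_le hx0 with h | h
  · exfalso
    rw [← h] at hfx
    norm_num [phiFn] at hfx
    have h2 : 2 < 1 / q := by rw [lt_div_iff₀ hq0]; linarith
    rw [one_div] at h2
    linarith
  · exact h

/-- Fix `0 < q < 1/2`.  For `0 < ε < 1/2`, the function `φ` is strictly
increasing on `[0, ∞)`, has a unique nonnegative fixed point `x₀`, every such fixed point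
exceeds `1`, and for all sufficiently small `ε` the fixed point satisfies
`x₀ < (2/q) log(1/ε)`. -/
theorem stmt17 (q : ℝ) (hq0 : 0 < q) (hq : q < 1 / 2) :
    (∀ ε : ℝ, 0 < ε → ε < 1 / 2 →
        StrictMonoOn (phiFn q ε) (Set.Ici 0)
        ∧ (∃! x₀ : ℝ, 0 ≤ x₀ ∧ phiFn q ε x₀ = x₀)
        ∧ ∀ x₀ : ℝ, 0 ≤ x₀ → phiFn q ε x₀ = x₀ → 1 < x₀)
    ∧ ∃ η : ℝ, 0 < η ∧ ∀ ε : ℝ, 0 < ε → ε < η →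
        ∀ x₀ : ℝ, 0 ≤ x₀ → phiFn q ε x₀ = x₀ →
          x₀ < (2 / q) * Real.log (1 / ε) := by
  constructor
  · intro ε hε hε2
    refine ⟨phi_mono hq0 ε, ?_, ?_⟩
    · obtain ⟨x, hx1, hFx⟩ := fix_exists hq0 hq hε hε2
      have hx0 : 0 < x := by linarith
      refine ⟨x, ⟨hx0.le, (fix_iff hq0 hx0).2 hFx⟩, ?_⟩
      rintro y ⟨hy0, hfy⟩
      have hy0' : 0 < y := fix_pos hq0 hq hε2 hy0 hfy
      have hFy := (fix_iff hq0 hy0').1 hfy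
      exact (F_anti hq0).injOn (Set.mem_Ioi.2 hy0') (Set.mem_Ioi.2 hx0) (by
        rw [hFy, hFx])
    · intro y hy0 hfy
      have hy0' : 0 < y := fix_pos hq0 hq hε2 hy0 hfy
      exact fix_gt_one hq0 hq hε hε2 hy0' ((fix_iff hq0 hy0').1 hfy)
  · refine ⟨min (1 / 2) (9 * q ^ 2 / 64), lt_min (by norm_num) (by positivity), ?_⟩
    intro ε hε hεη x hx0 hfx
    have hε2 : ε < 1 / 2 := lt_of_lt_of_le hεη (min_le_left _ _)
    have hεq : ε < 9 * q ^ 2 / 64 := lt_of_lt_of_le hεη (min_le_right _ _)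
    have hx0' : 0 < x := fix_pos hq0 hq hε2 hx0 hfx
    exact fix_lt_X hq0 hε hε2 hεq hx0' ((fix_iff hq0 hx0').1 hfx)
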